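/- Let p > 3 be a prime, r = (p²−1)/2, let α ∈ ℝ be the positive real r-th root of p, and let ζ = e^{2πi/(p+1)} ∈ ℂ be a primitive (p+1)-th root of unity. Let K = ℚ(α, ζ) ⊆ ℂ. Then the degree of K over ℚ equals φ(p+1)·(p²−1)/2. -/

import Mathlib

open NumberField IntermediateField

set_option maxHeartbeats 2000000
set_option synthInstance.maxHeartbeats 200000

open Polynomial in
/-- Core arithmetic lemma: in `ℚ(ζₘ)` with `p` a prime not dividing `m`, no element has
`k`-th power equal to `±p` (for `k ≥ 2`). -/
private lemma aux_no_pow (p m : ℕ) (hp : p.Prime) (hpm : ¬ p ∣ m) (hm : 0 < m)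
    (ζ : ℂ) (hζ : IsPrimitiveRoot ζ m) (k : ℕ) (hk : 2 ≤ k) (ε : ℤ) (hε : ε = 1 ∨ ε = -1)
    (y : ℚ⟮ζ⟯) (hy : y ^ k = (ε : ℚ⟮ζ⟯) * (p : ℚ⟮ζ⟯)) : False := by
  haveI := Fact.mk hp
  haveI : NeZero p := ⟨hp.pos.ne'⟩
  have hζQ : IsIntegral ℚ ζ := (hζ.isIntegral hm).tower_top
  set g : ℚ⟮ζ⟯ := AdjoinSimple.gen ℚ ζ with hgdef
  have hgmap : algebraMap ℚ⟮ζ⟯ ℂ g = ζ := AdjoinSimple.algebraMap_gen ℚ ζ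
  have hgprim : IsPrimitiveRoot g m :=
    IsPrimitiveRoot.of_map_of_injective (by rwa [hgmap]) (algebraMap ℚ⟮ζ⟯ ℂ).injective
  have hgint : IsIntegral ℤ g := hgprim.isIntegral hm
  haveI : FiniteDimensional ℚ ℚ⟮ζ⟯ := adjoin.finiteDimensional hζQ
  have hpz : Prime (p : ℤ) := Nat.prime_iff_prime_int.mp hp
  -- integrality helpers
  have haev : ∀ q : ℤ[X], IsIntegral ℤ (aeval g q) := fun q => by
    have hmem : aeval g q ∈ Algebra.adjoin ℤ ({g} : Set ℚ⟮ζ⟯) := by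
      rw [Algebra.adjoin_singleton_eq_range_aeval]; exact AlgHom.mem_range_self _ q
    exact adjoin_le_integralClosure hgint hmem
  have hnorm_int : ∀ x : ℚ⟮ζ⟯, IsIntegral ℤ x → ∃ a : ℤ, (a : ℚ) = Algebra.norm ℚ x := by
    intro x hx
    obtain ⟨a, ha⟩ := IsIntegrallyClosed.isIntegral_iff.mp (Algebra.isIntegral_norm ℚ hx)
    exact ⟨a, by rw [← ha]; simp⟩
  -- the power basis given by ζ
  set B : PowerBasis ℚ ℚ⟮ζ⟯ := adjoin.powerBasis hζQ with hBdef
  have hBgen : B.gen = g := rfl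
  have hminQ : minpoly ℚ g = cyclotomic m ℚ := by
    rw [hgdef]; erw [minpoly_gen ℚ ζ, ← cyclotomic_eq_minpoly_rat hζ hm]
  have hminZ : minpoly ℤ g = cyclotomic m ℤ := (cyclotomic_eq_minpoly hgprim hm).symm
  set n := Module.finrank ℚ ℚ⟮ζ⟯ with hn
  have hn0 : 0 < n := Module.finrank_pos
  -- the discriminant
  set w : ℚ⟮ζ⟯ := aeval g (derivative (cyclotomic m ℤ)) with hw
  obtain ⟨W, hW⟩ := hnorm_int w (haev _)
  have hD : Algebra.discr ℚ ⇑B.basis = (-1) ^ (n * (n - 1) / 2) * (W : ℚ) := by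
    rw [Algebra.discr_powerBasis_eq_norm, hBgen, hminQ, ← map_cyclotomic_int m ℚ,
      show Int.castRingHom ℚ = algebraMap ℤ ℚ from rfl, derivative_map,
      aeval_map_algebraMap, ← hw, ← hW, ← hn]
  -- `p` does not divide the discriminant
  obtain ⟨cp, hcp⟩ := cyclotomic.dvd_X_pow_sub_one m ℤ
  have haevΦ : aeval g (cyclotomic m ℤ) = 0 := by rw [← hminZ]; exact minpoly.aeval ℤ g
  have hkey : ((m : ℤ) : ℚ⟮ζ⟯) * g ^ (m - 1) = w * aeval g cp := by
    have h1 : aeval g (derivative (X ^ m - 1 : ℤ[X])) =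
        aeval g (derivative (cyclotomic m ℤ * cp)) := by rw [← hcp]
    rw [derivative_sub, derivative_one, derivative_X_pow, sub_zero, derivative_mul,
      map_mul, aeval_C, map_pow, aeval_X, map_add, map_mul, map_mul, haevΦ, zero_mul,
      add_zero, algebraMap_int_eq, eq_intCast] at h1
    exact h1
  obtain ⟨G, hG⟩ := hnorm_int g hgint
  obtain ⟨Cc, hCc⟩ := hnorm_int (aeval g cp) (haev _)
  have hGu : G = 1 ∨ G = -1 := by
    have h2 : (G : ℚ) ^ m = 1 := by
      rw [hG, ← map_pow, hgprim.pow_eq_one, map_one]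
    have h3 : G ^ m = 1 := by exact_mod_cast h2
    exact Int.isUnit_iff.mp (IsUnit.of_pow_eq_one h3 hm.ne')
  have hnormeq : (m : ℤ) ^ n * G ^ (m - 1) = W * Cc := by
    have h4 := congrArg (Algebra.norm ℚ) hkey
    have hm' : ((m : ℤ) : ℚ⟮ζ⟯) = algebraMap ℚ ℚ⟮ζ⟯ ((m : ℤ) : ℚ) := by
      simp
    rw [map_mul, map_mul, map_pow, hm', Algebra.norm_algebraMap, ← hG, ← hW, ← hCc, ← hn] at h4
    exact_mod_cast h4
  have hpW : ¬ (p : ℤ) ∣ W := by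
    intro hdvd
    have h5 : (p : ℤ) ∣ (m : ℤ) ^ n * G ^ (m - 1) := by
      rw [hnormeq]; exact hdvd.mul_right Cc
    have hGm : G ^ (m - 1) = 1 ∨ G ^ (m - 1) = -1 := by
      rcases hGu with rfl | rfl
      · left; exact one_pow _
      · rcases Nat.even_or_odd (m - 1) with h | h
        · left; exact h.neg_one_pow
        · right; exact h.neg_one_pow
    have h6 : (p : ℤ) ∣ (m : ℤ) ^ n := by
      rcases hGm with h | h
      · rwa [h, mul_one] at h5
      · rw [h, mul_neg, mul_one, dvd_neg] at h5; exact h5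
    have h7 : (p : ℤ) ∣ (m : ℤ) := hpz.dvd_of_dvd_pow h6
    exact hpm (Int.natCast_dvd_natCast.mp h7)
  set Dz : ℤ := (-1) ^ (n * (n - 1) / 2) * W with hDzdef
  have hDzQ : ((Dz : ℚ)) = Algebra.discr ℚ ⇑B.basis := by rw [hD, hDzdef]; push_cast; ring
  have hpDz : ¬ (p : ℤ) ∣ Dz := by
    intro h
    rcases hpz.dvd_mul.mp h with h' | h'
    · have := hpz.dvd_of_dvd_pow h'
      rw [dvd_neg] at this
      exact hpz.not_dvd_one this
    · exact hpW h'
  -- y is an algebraic integer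
  have hyint : IsIntegral ℤ y := by
    refine ⟨X ^ k - C (ε * (p : ℤ)), monic_X_pow_sub_C _ (by omega), ?_⟩
    rw [← Polynomial.aeval_def, map_sub, map_pow, aeval_X, aeval_C, hy,
      algebraMap_int_eq, eq_intCast]
    push_cast
    ring
  -- clear denominators
  have H := Algebra.discr_mul_isIntegral_mem_adjoin ℚ
    (show IsIntegral ℤ B.gen from hBgen ▸ hgint) hyint
  rw [← hDzQ, hBgen] at H
  have hsm : ((Dz : ℚ)) • y = ((Dz : ℚ⟮ζ⟯)) * y := by
    simp [Algebra.smul_def]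
  rw [hsm] at H
  set z : ℚ⟮ζ⟯ := (Dz : ℚ⟮ζ⟯) * y with hzdef
  rw [Algebra.adjoin_singleton_eq_range_aeval] at H
  obtain ⟨gp, hgp₀⟩ := H
  have hgp : aeval g gp = z := hgp₀
  have hzk : z ^ k = ((Dz ^ k * ε * (p : ℤ) : ℤ) : ℚ⟮ζ⟯) := by
    rw [hzdef, mul_pow, hy]; push_cast; ring
  have hdvd1 : cyclotomic m ℤ ∣ gp ^ k - C (Dz ^ k * ε * (p : ℤ)) := by
    rw [← hminZ]
    refine minpoly.isIntegrallyClosed_dvd hgint ?_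
    rw [map_sub, map_pow, hgp, hzk, aeval_C, algebraMap_int_eq, eq_intCast, sub_self]
  -- reduce modulo p
  have hm0 : ((m : ZMod p)) ≠ 0 := fun h => hpm ((ZMod.natCast_eq_zero_iff m p).mp h)
  have hsq : Squarefree (cyclotomic m (ZMod p)) :=
    ((X_pow_sub_one_separable_iff.mpr hm0).squarefree).squarefree_of_dvd
      (cyclotomic.dvd_X_pow_sub_one m _)
  have hmap1 : (gp ^ k - C (Dz ^ k * ε * (p : ℤ))).map (Int.castRingHom (ZMod p)) =
      (gp.map (Int.castRingHom (ZMod p))) ^ k := by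
    rw [Polynomial.map_sub, Polynomial.map_pow, map_C]
    have hc0 : (Int.castRingHom (ZMod p)) (Dz ^ k * ε * (p : ℤ)) = 0 := by
      have h0 : ((Dz ^ k * ε * (p : ℤ) : ℤ) : ZMod p) = 0 := by
        rw [ZMod.intCast_zmod_eq_zero_iff_dvd]
        exact ⟨Dz ^ k * ε, by ring⟩
      simpa using h0
    rw [hc0, C_0, sub_zero]
  have hdvd2 : cyclotomic m (ZMod p) ∣ (gp.map (Int.castRingHom (ZMod p))) ^ k := by
    rw [← hmap1, ← map_cyclotomic_int m (ZMod p)]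
    exact Polynomial.map_dvd _ hdvd1
  have hdvd3 := hsq.isRadical k _ hdvd2
  obtain ⟨tb, htb⟩ := hdvd3
  obtain ⟨t, ht⟩ := Polynomial.map_surjective (Int.castRingHom (ZMod p))
    (fun b => ZMod.intCast_surjective b) tb
  have hker : (gp - cyclotomic m ℤ * t).map (Int.castRingHom (ZMod p)) = 0 := by
    rw [Polynomial.map_sub, Polynomial.map_mul, map_cyclotomic_int, ht, ← htb]; ring
  have hCp : C (p : ℤ) ∣ gp - cyclotomic m ℤ * t := by
    rw [C_dvd_iff_dvd_coeff]
    intro i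
    have h8 := congrArg (fun q : (ZMod p)[X] => q.coeff i) hker
    simp only [coeff_map, coeff_zero] at h8
    exact (ZMod.intCast_zmod_eq_zero_iff_dvd _ p).mp h8
  obtain ⟨sp, hsp⟩ := hCp
  have hzp : z = ((p : ℕ) : ℚ⟮ζ⟯) * aeval g sp := by
    have h9 : gp = cyclotomic m ℤ * t + C (p : ℤ) * sp := by rw [← hsp]; ring
    rw [← hgp, h9, map_add, map_mul, map_mul, haevΦ, zero_mul, zero_add, aeval_C]
    simp
  -- final contradiction via the norm
  obtain ⟨Z, hZ⟩ := hnorm_int (aeval g sp) (haev _)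
  have hppos : ((p : ℕ) : ℚ⟮ζ⟯) ≠ 0 := by
    intro h
    have := congrArg (algebraMap ℚ⟮ζ⟯ ℂ) h
    simp at this
    exact hp.pos.ne' this
  have hfin : ((p : ℕ) : ℚ⟮ζ⟯) ^ (k - 1) * (aeval g sp) ^ k = ((Dz ^ k * ε : ℤ) : ℚ⟮ζ⟯) := by
    have h10 : ((p : ℕ) : ℚ⟮ζ⟯) ^ k * (aeval g sp) ^ k = ((Dz ^ k * ε : ℤ) : ℚ⟮ζ⟯) *
        ((p : ℕ) : ℚ⟮ζ⟯) := by
      rw [← mul_pow, ← hzp, hzk]; push_cast; ring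
    apply mul_right_cancel₀ hppos
    have hps : ((p : ℕ) : ℚ⟮ζ⟯) ^ (k - 1) * ((p : ℕ) : ℚ⟮ζ⟯) = ((p : ℕ) : ℚ⟮ζ⟯) ^ k := by
      rw [← pow_succ]
      congr 1
      omega
    calc ((p : ℕ) : ℚ⟮ζ⟯) ^ (k - 1) * (aeval g sp) ^ k * ((p : ℕ) : ℚ⟮ζ⟯)
        = (((p : ℕ) : ℚ⟮ζ⟯) ^ (k - 1) * ((p : ℕ) : ℚ⟮ζ⟯)) * (aeval g sp) ^ k := by ring
      _ = ((p : ℕ) : ℚ⟮ζ⟯) ^ k * (aeval g sp) ^ k := by rw [hps]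
      _ = ((Dz ^ k * ε : ℤ) : ℚ⟮ζ⟯) * ((p : ℕ) : ℚ⟮ζ⟯) := h10
  have h11 := congrArg (Algebra.norm ℚ) hfin
  have hpmap : ((p : ℕ) : ℚ⟮ζ⟯) = algebraMap ℚ ℚ⟮ζ⟯ ((p : ℕ) : ℚ) := by simp
  have hεmap : ((Dz ^ k * ε : ℤ) : ℚ⟮ζ⟯) = algebraMap ℚ ℚ⟮ζ⟯ ((Dz ^ k * ε : ℤ) : ℚ) := by simp
  rw [map_mul, map_pow, map_pow, ← hZ, hpmap, hεmap, Algebra.norm_algebraMap,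
    Algebra.norm_algebraMap, ← hn] at h11
  have h13 : (p : ℤ) ^ (n * (k - 1)) * Z ^ k = (Dz ^ k * ε) ^ n := by
    have h12 : ((p : ℕ) : ℚ) ^ (n * (k - 1)) * (Z : ℚ) ^ k = (((Dz ^ k * ε : ℤ)) : ℚ) ^ n := by
      rw [pow_mul]; exact h11
    exact_mod_cast h12
  have h14 : (p : ℤ) ∣ (Dz ^ k * ε) ^ n := by
    rw [← h13]
    exact Dvd.dvd.mul_right (dvd_pow_self _ (Nat.mul_ne_zero hn0.ne' (by omega))) _
  have h15 : (p : ℤ) ∣ Dz ^ k * ε := hpz.dvd_of_dvd_pow h14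
  rcases hpz.dvd_mul.mp h15 with h | h
  · exact hpDz (hpz.dvd_of_dvd_pow h)
  · rcases hε with rfl | rfl
    · exact hpz.not_dvd_one h
    · rw [dvd_neg] at h
      exact hpz.not_dvd_one h

open Polynomial in
/-- The degree of `L(p^{1/d})` over `L`, for each divisor `d` of `R`,
provided no `k`-th power in `L` equals `±p`. -/
private lemma aux_key (p : ℕ) (hp : p.Prime) (L : IntermediateField ℚ ℂ)
    (hstep : ∀ k : ℕ, 2 ≤ k → ∀ ε : ℤ, (ε = 1 ∨ ε = -1) → ∀ y : L,
      y ^ k ≠ (ε : L) * ((p : ℕ) : L))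
    (A : ℂ) (R : ℕ) (hR : 0 < R) (hAR : A ^ R = ((p : ℕ) : ℂ)) :
    ∀ d c : ℕ, d * c = R →
      Module.finrank L (IntermediateField.adjoin L {A ^ c}) = d := by
  intro d
  induction d using Nat.strong_induction_on with
  | _ d IH =>
  intro c hdc
  have hd0 : d ≠ 0 := by rintro rfl; rw [zero_mul] at hdc; omega
  by_cases hd1 : d = 1
  · subst hd1
    have hc : c = R := by omega
    subst hc
    rw [hAR, show ((p : ℕ) : ℂ) = algebraMap L ℂ ((p : ℕ) : L) from by simp,
      adjoin.finrank (isIntegral_algebraMap), minpoly.eq_X_sub_C, natDegree_X_sub_C]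
  · set q := d.minFac with hqdef
    have hqp : q.Prime := Nat.minFac_prime hd1
    set e := d / q with hedef
    have hqe : q * e = d := Nat.mul_div_cancel' d.minFac_dvd
    have he0 : e ≠ 0 := fun h => hd0 (by rw [← hqe, h, mul_zero])
    have helt : e < d := Nat.div_lt_self (Nat.pos_of_ne_zero hd0) hqp.one_lt
    have hIH : Module.finrank L (IntermediateField.adjoin L {A ^ (c * q)}) = e :=
      IH e helt (c * q) (by rw [← hdc, ← hqe]; ring)
    set θe : ℂ := A ^ (c * q) with hθedef
    set θd : ℂ := A ^ c with hθddef
    have hpow : θd ^ q = θe := by rw [hθddef, hθedef, ← pow_mul]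
    have hθee : θe ^ e = ((p : ℕ) : ℂ) := by
      rw [hθedef, ← pow_mul, show (c * q) * e = R from by rw [← hdc, ← hqe]; ring, hAR]
    have hθe_int : IsIntegral L θe := by
      refine ⟨X ^ e - C ((p : ℕ) : L), monic_X_pow_sub_C _ he0, ?_⟩
      rw [← Polynomial.aeval_def, map_sub, map_pow, aeval_X, aeval_C,
        show (algebraMap L ℂ) ((p : ℕ) : L) = ((p : ℕ) : ℂ) from by simp, hθee, sub_self]
    have hfinM : Module.finrank L L⟮θe⟯ = e := hIH
    -- the minimal polynomial of θe over L
    have hminθe : minpoly L θe = X ^ e - C ((p : ℕ) : L) := by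
      have hdvd : minpoly L θe ∣ X ^ e - C ((p : ℕ) : L) := by
        refine minpoly.dvd _ _ ?_
        rw [map_sub, map_pow, aeval_X, aeval_C]
        rw [show (algebraMap L ℂ) ((p : ℕ) : L) = ((p : ℕ) : ℂ) from by simp, hθee, sub_self]
      have hndeg : (minpoly L θe).natDegree = e := by
        rw [← adjoin.finrank hθe_int, hfinM]
      refine (Polynomial.eq_of_monic_of_dvd_of_natDegree_le (minpoly.monic hθe_int)
        (monic_X_pow_sub_C _ he0) hdvd ?_).symm
      rw [natDegree_X_pow_sub_C, hndeg]
    haveI : FiniteDimensional L L⟮θe⟯ := adjoin.finiteDimensional hθe_int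
    -- the norm of the generator of M = L⟮θe⟯
    have hnormgen : Algebra.norm L (AdjoinSimple.gen L θe) = (-1) ^ (e + 1) * ((p : ℕ) : L) := by
      have h1 := Algebra.PowerBasis.norm_gen_eq_coeff_zero_minpoly (adjoin.powerBasis hθe_int)
      rw [adjoin.powerBasis_gen, adjoin.powerBasis_dim, minpoly_gen, hminθe] at h1
      rw [h1, natDegree_X_pow_sub_C]
      have hc0 : (X ^ e - C ((p : ℕ) : L)).coeff 0 = -((p : ℕ) : L) := by
        rw [coeff_sub, coeff_X_pow, coeff_C, if_neg (fun h : (0 : ℕ) = e => he0 h.symm),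
          if_pos rfl, zero_sub]
      rw [hc0, pow_succ]
      ring
    -- X^q - gen is irreducible over M
    have hirr : Irreducible (X ^ q - C (AdjoinSimple.gen L θe)) := by
      apply X_pow_sub_C_irreducible_of_prime hqp
      intro b hb
      have hnb := congrArg (Algebra.norm L) hb
      rw [map_pow, hnormgen] at hnb
      refine hstep q hqp.two_le ((-1) ^ (e + 1)) ?_ (Algebra.norm L b) ?_
      · rcases Nat.even_or_odd (e + 1) with h | h
        · left; exact h.neg_one_pow
        · right; exact h.neg_one_pow
      · rw [hnb]; push_cast; ring
    have hmind : minpoly L⟮θe⟯ θd = X ^ q - C (AdjoinSimple.gen L θe) := by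
      refine (minpoly.eq_of_irreducible_of_monic hirr ?_ (monic_X_pow_sub_C _ hqp.ne_zero)).symm
      rw [map_sub, map_pow, aeval_X, aeval_C, AdjoinSimple.algebraMap_gen, hpow, sub_self]
    have hθd_int : IsIntegral L⟮θe⟯ θd := by
      refine ⟨X ^ q - C (AdjoinSimple.gen L θe), monic_X_pow_sub_C _ hqp.ne_zero, ?_⟩
      rw [← Polynomial.aeval_def, map_sub, map_pow, aeval_X, aeval_C,
        AdjoinSimple.algebraMap_gen, hpow, sub_self]
    have hfin2 : Module.finrank L⟮θe⟯ L⟮θe⟯⟮θd⟯ = q := by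
      rw [adjoin.finrank hθd_int, hmind, natDegree_X_pow_sub_C]
    -- the tower
    have htower : Module.finrank L L⟮θe⟯⟮θd⟯ = d := by
      rw [← Module.finrank_mul_finrank L L⟮θe⟯ L⟮θe⟯⟮θd⟯, hfinM, hfin2, ← hqe]
      ring
    have hid : (L⟮θe⟯⟮θd⟯).restrictScalars L = L⟮θd⟯ := by
      rw [adjoin_simple_adjoin_simple]
      apply le_antisymm
      · rw [adjoin_le_iff]
        rintro x hx
        simp only [Set.mem_insert_iff, Set.mem_singleton_iff] at hx
        rcases hx with rfl | rfl
        · rw [← hpow]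
          exact pow_mem (mem_adjoin_simple_self L θd) q
        · exact mem_adjoin_simple_self L θd
      · apply adjoin.mono
        intro x hx
        simp only [Set.mem_singleton_iff] at hx
        simp [hx]
    have : Module.finrank L L⟮θd⟯ = Module.finrank L ((L⟮θe⟯⟮θd⟯).restrictScalars L) := by
      rw [hid]
    rw [show IntermediateField.adjoin L {A ^ c} = L⟮θd⟯ from rfl, this]
    exact htower

/-- The number field `K = ℚ(p^{2/(p²−1)}, ζ_{p+1}) ⊆ ℂ` has degree `φ(p+1)·(p²−1)/2` over `ℚ`. -/
theorem stmt2 (p : ℕ) (hp : p.Prime) (hp3 : 3 < p) (r : ℕ) (hr : r = (p ^ 2 - 1) / 2)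
    (α : ℝ) (hα : α = (p : ℝ) ^ ((r : ℝ)⁻¹))
    (ζ : ℂ) (hζ : ζ = Complex.exp (2 * Real.pi * Complex.I / (p + 1))) :
    2 * Module.finrank ℚ ℚ⟮(α : ℂ), ζ⟯ = Nat.totient (p + 1) * (p ^ 2 - 1) := by
  have hp4 : 4 ≤ p := hp3
  have hpsq : 16 ≤ p ^ 2 := by nlinarith
  have hr0 : 0 < r := by omega
  -- ζ is a primitive (p+1)-th root of unity
  have hζprim : IsPrimitiveRoot ζ (p + 1) := by
    have := Complex.isPrimitiveRoot_exp (p + 1) (by omega)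
    rw [hζ]
    convert this using 3
    push_cast
    ring
  have hpm : ¬ p ∣ (p + 1) := by
    intro h
    have h1 := (Nat.dvd_add_right (dvd_refl p)).mp h
    have h2 : p ≤ 1 := Nat.le_of_dvd one_pos h1
    omega
  -- α to the r-th power is p
  have hαr : ((α : ℂ)) ^ r = ((p : ℕ) : ℂ) := by
    have h1 : α ^ r = (p : ℝ) := by
      rw [hα]
      exact Real.rpow_inv_natCast_pow (by positivity) hr0.ne'
    calc ((α : ℂ)) ^ r = ((α ^ r : ℝ) : ℂ) := by push_cast; ring
      _ = ((p : ℕ) : ℂ) := by rw [h1]; push_cast; ring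
  -- degree of the cyclotomic part
  have hζQ : IsIntegral ℚ ζ := ((hζprim.isIntegral (by omega)).tower_top : IsIntegral ℚ ζ)
  haveI : FiniteDimensional ℚ ℚ⟮ζ⟯ := adjoin.finiteDimensional hζQ
  have hcyc : Module.finrank ℚ ℚ⟮ζ⟯ = Nat.totient (p + 1) := by
    rw [adjoin.finrank hζQ, ← Polynomial.cyclotomic_eq_minpoly_rat hζprim (by omega),
      Polynomial.natDegree_cyclotomic]
  -- degree of the Kummer part
  have hkummer : Module.finrank ℚ⟮ζ⟯ ℚ⟮ζ⟯⟮(α : ℂ)⟯ = r := by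
    have hmain := aux_key p hp ℚ⟮ζ⟯
      (fun k hk ε hε y hy => aux_no_pow p (p + 1) hp hpm (by omega) ζ hζprim k hk ε hε y hy)
      (α : ℂ) r hr0 hαr r 1 (mul_one r)
    rwa [pow_one] at hmain
  -- assemble the tower
  have hpair : ℚ⟮(α : ℂ), ζ⟯ = ℚ⟮ζ, (α : ℂ)⟯ := by
    show IntermediateField.adjoin ℚ {(α : ℂ), ζ} = IntermediateField.adjoin ℚ {ζ, (α : ℂ)}
    rw [Set.pair_comm]
  have htot : Module.finrank ℚ ℚ⟮ζ, (α : ℂ)⟯ = Nat.totient (p + 1) * r := by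
    rw [← adjoin_simple_adjoin_simple]
    change Module.finrank ℚ ℚ⟮ζ⟯⟮(α : ℂ)⟯ = _
    rw [← Module.finrank_mul_finrank ℚ ℚ⟮ζ⟯ ℚ⟮ζ⟯⟮(α : ℂ)⟯, hcyc, hkummer]
  rw [hpair, htot]
  have h2r : 2 * r = p ^ 2 - 1 := by
    have hoddp : Odd p := hp.odd_of_ne_two (by omega)
    have hodd2 : Odd (p ^ 2) := hoddp.pow
    have h2d : 2 ∣ p ^ 2 - 1 := by
      obtain ⟨t, ht⟩ := hodd2
      omega
    rw [hr]
    exact Nat.mul_div_cancel' h2d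
  calc 2 * (Nat.totient (p + 1) * r) = Nat.totient (p + 1) * (2 * r) := by ring
    _ = Nat.totient (p + 1) * (p ^ 2 - 1) := by rw [h2r]
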